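/- For n i.i.d. random phase unitaries U^1,...,U^n on C^d (each diagonal with i.i.d. phases satisfying E[e^{iθ}] = 0 and the fourth-moment identity E[e^{i(θ(a)-θ(b)+θ(c)-θ(e))}] = (δ_{ab}δ_{ce} + δ_{ae}δ_{bc})/(1+δ_{ac})), any Fourier basis vector |m⟩ = ⊗_j |m^j⟩, and any unit vector |Φ⟩ ∈ (C^d)^{⊗n}, the random variable q(Φ) = |⟨Φ| (⊗_j U^j) |m⟩|² satisfies E[q(Φ)²] ≤ 2^n / d^{2n}. -/

import Mathlib

open MeasureTheory ProbabilityTheory Finset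


lemma norm_exp_I_mul_real (t : ℝ) : ‖Complex.exp (Complex.I * t)‖ = 1 := by
  rw [Complex.norm_exp]
  simp [Complex.mul_re]

lemma Dnorm_le {d : ℕ} (a b c e : Fin d) :
    ‖(((if a = b then (1:ℂ) else 0) * (if c = e then 1 else 0)
        + (if a = e then 1 else 0) * (if b = c then 1 else 0))
      / (1 + (if a = c then 1 else 0)))‖
      ≤ (if a = b then (1:ℝ) else 0) * (if c = e then 1 else 0)
        + (if a = e then 1 else 0) * (if b = c then 1 else 0) := by
  split_ifs <;> norm_num


lemma norm_exp_fourier (a b dd : ℕ) :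
    ‖Complex.exp (2 * Real.pi * Complex.I * (a : ℕ) * (b : ℕ) / (dd : ℕ))‖ = 1 := by
  rw [Complex.norm_exp]
  have : ((2 : ℂ) * Real.pi * Complex.I * a * b / dd).re = 0 := by
    simp [Complex.div_re, Complex.mul_re, Complex.mul_im]
  rw [this, Real.exp_zero]

lemma sum_mul4 {ι : Type*} [Fintype ι] (A B C D : ι → ℂ) :
    (∑ w, A w) * (∑ x, B x) * ((∑ y, C y) * (∑ z, D z))
    = ∑ q : ι × ι × ι × ι, A q.1 * B q.2.1 * C q.2.2.1 * D q.2.2.2 := by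
  rw [Finset.sum_mul_sum, Finset.sum_mul_sum]
  simp only [Fintype.sum_prod_type]
  rw [Finset.sum_mul]
  refine Finset.sum_congr rfl fun w _ => ?_
  rw [Finset.sum_mul]
  refine Finset.sum_congr rfl fun x _ => ?_
  rw [Finset.mul_sum]
  refine Finset.sum_congr rfl fun y _ => ?_
  rw [Finset.mul_sum]
  refine Finset.sum_congr rfl fun z _ => ?_
  ring



lemma aux_prod_indicator {n d : ℕ} (x g : Fin n → Fin d) :
    ∏ j, (if x j = g j then (1:ℝ) else 0) = if x = g then 1 else 0 := by
  by_cases h : x = g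
  · simp [h]
  · rw [if_neg h]
    obtain ⟨j, hj⟩ := Function.ne_iff.mp h
    exact Finset.prod_eq_zero (mem_univ j) (by simp [hj])

def cmb {n d : ℕ} (t : Finset (Fin n)) (a b : Fin n → Fin d) : Fin n → Fin d :=
  fun j => if j ∈ t then a j else b j

lemma cmb_cmb {n d : ℕ} (t : Finset (Fin n)) (a b : Fin n → Fin d) :
    cmb t (cmb t a b) (cmb t b a) = a := by
  funext j; by_cases h : j ∈ t <;> simp [cmb, h]

lemma delta_split {n d : ℕ} (t : Finset (Fin n)) (w x y z : Fin n → Fin d) :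
    (∏ j ∈ t, ((if w j = x j then (1:ℝ) else 0) * (if y j = z j then 1 else 0))) *
    ∏ j ∈ univ \ t, ((if w j = z j then (1:ℝ) else 0) * (if x j = y j then 1 else 0))
    = (if x = cmb t w y then (1:ℝ) else 0) * (if z = cmb t y w then 1 else 0) := by
  rw [Finset.prod_mul_distrib, Finset.prod_mul_distrib, ← aux_prod_indicator x (cmb t w y),
    ← aux_prod_indicator z (cmb t y w)]
  have h1 : ∏ j, (if x j = cmb t w y j then (1:ℝ) else 0)
      = (∏ j ∈ t, (if w j = x j then (1:ℝ) else 0)) *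
        ∏ j ∈ univ \ t, (if x j = y j then (1:ℝ) else 0) := by
    rw [← Finset.prod_mul_prod_compl t (fun j => if x j = cmb t w y j then (1:ℝ) else 0),
      Finset.compl_eq_univ_sdiff]
    congr 1
    · exact Finset.prod_congr rfl fun j hj => by simp [cmb, hj, eq_comm]
    · refine Finset.prod_congr rfl fun j hj => ?_
      have : j ∉ t := (Finset.mem_sdiff.mp hj).2
      simp [cmb, this]
  have h2 : ∏ j, (if z j = cmb t y w j then (1:ℝ) else 0)
      = (∏ j ∈ t, (if y j = z j then (1:ℝ) else 0)) *
        ∏ j ∈ univ \ t, (if w j = z j then (1:ℝ) else 0) := by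
    rw [← Finset.prod_mul_prod_compl t (fun j => if z j = cmb t y w j then (1:ℝ) else 0),
      Finset.compl_eq_univ_sdiff]
    congr 1
    · exact Finset.prod_congr rfl fun j hj => by simp [cmb, hj, eq_comm]
    · refine Finset.prod_congr rfl fun j hj => ?_
      have : j ∉ t := (Finset.mem_sdiff.mp hj).2
      simp [cmb, this, eq_comm]
  rw [h1, h2]; ring

lemma ind_swap {n d : ℕ} (t : Finset (Fin n)) (w x y z : Fin n → Fin d) :
    (if x = cmb t w y then (1:ℝ) else 0) * (if z = cmb t y w then 1 else 0)
    = (if w = cmb t x z then (1:ℝ) else 0) * (if y = cmb t z x then 1 else 0) := by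
  have key : (x = cmb t w y ∧ z = cmb t y w) ↔ (w = cmb t x z ∧ y = cmb t z x) := by
    constructor
    · rintro ⟨rfl, rfl⟩
      exact ⟨(cmb_cmb t w y).symm, (cmb_cmb t y w).symm⟩
    · rintro ⟨rfl, rfl⟩
      exact ⟨(cmb_cmb t x z).symm, (cmb_cmb t z x).symm⟩
  by_cases h1 : x = cmb t w y ∧ z = cmb t y w
  · have h2 := key.mp h1
    rw [if_pos h1.1, if_pos h1.2, if_pos h2.1, if_pos h2.2]
  · have h2 : ¬(w = cmb t x z ∧ y = cmb t z x) := fun h => h1 (key.mpr h)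
    rcases not_and_or.mp h1 with h | h <;> rcases not_and_or.mp h2 with h' | h' <;>
      simp [h, h']

abbrev Quad (n d : ℕ) := (Fin n → Fin d) × (Fin n → Fin d) × (Fin n → Fin d) × (Fin n → Fin d)

lemma sum_quad_one {n d : ℕ} (f : (Fin n → Fin d) → ℝ) (hsum : ∑ w, f w ^ 2 = 1)
    (t : Finset (Fin n)) :
    ∑ q : Quad n d, f q.1 ^ 2 * f q.2.2.1 ^ 2 *
      ((if q.2.1 = cmb t q.1 q.2.2.1 then (1:ℝ) else 0) *
       (if q.2.2.2 = cmb t q.2.2.1 q.1 then 1 else 0)) = 1 := by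
  simp only [Fintype.sum_prod_type]
  have h : ∀ w y : Fin n → Fin d, ∑ x, ∑ z : Fin n → Fin d, f w ^ 2 * f y ^ 2 *
      ((if x = cmb t w y then (1:ℝ) else 0) * (if z = cmb t y w then 1 else 0))
      = f w ^ 2 * f y ^ 2 := by
    intro w y
    simp [mul_ite, Finset.sum_ite_eq']
  calc ∑ w, ∑ x, ∑ y, ∑ z, f w ^ 2 * f y ^ 2 *
      ((if x = cmb t w y then (1:ℝ) else 0) * (if z = cmb t y w then 1 else 0))
      = ∑ w, ∑ y : Fin n → Fin d, f w ^ 2 * f y ^ 2 := by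
        refine Finset.sum_congr rfl fun w _ => ?_
        rw [Finset.sum_comm]
        exact Finset.sum_congr rfl fun y _ => h w y
    _ = (∑ w, f w ^ 2) * (∑ y, f y ^ 2) := (Finset.sum_mul_sum _ _ _ _).symm
    _ = 1 := by rw [hsum]; ring

lemma sum_quad_one' {n d : ℕ} (f : (Fin n → Fin d) → ℝ) (hsum : ∑ w, f w ^ 2 = 1)
    (t : Finset (Fin n)) :
    ∑ q : Quad n d, f q.2.1 ^ 2 * f q.2.2.2 ^ 2 *
      ((if q.2.1 = cmb t q.1 q.2.2.1 then (1:ℝ) else 0) *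
       (if q.2.2.2 = cmb t q.2.2.1 q.1 then 1 else 0)) = 1 := by
  refine (Fintype.sum_equiv
    ⟨fun q => (q.2.1, q.1, q.2.2.2, q.2.2.1), fun q => (q.2.1, q.1, q.2.2.2, q.2.2.1),
      fun q => rfl, fun q => rfl⟩ _ _ fun q => ?_).trans (sum_quad_one f hsum t)
  obtain ⟨w, x, y, z⟩ := q
  exact congrArg (fun r => f x ^ 2 * f z ^ 2 * r) (ind_swap t w x y z)

lemma per_t_bound {n d : ℕ} (f : (Fin n → Fin d) → ℝ) (hf : ∀ w, 0 ≤ f w)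
    (hsum : ∑ w, f w ^ 2 = 1) (t : Finset (Fin n)) :
    ∑ q : Quad n d, f q.1 * f q.2.1 * f q.2.2.1 * f q.2.2.2 *
      ((if q.2.1 = cmb t q.1 q.2.2.1 then (1:ℝ) else 0) *
       (if q.2.2.2 = cmb t q.2.2.1 q.1 then 1 else 0)) ≤ 1 := by
  have step : ∀ q : Quad n d, f q.1 * f q.2.1 * f q.2.2.1 * f q.2.2.2 *
      ((if q.2.1 = cmb t q.1 q.2.2.1 then (1:ℝ) else 0) *
       (if q.2.2.2 = cmb t q.2.2.1 q.1 then 1 else 0))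
      ≤ (f q.1 ^ 2 * f q.2.2.1 ^ 2 + f q.2.1 ^ 2 * f q.2.2.2 ^ 2) / 2 *
      ((if q.2.1 = cmb t q.1 q.2.2.1 then (1:ℝ) else 0) *
       (if q.2.2.2 = cmb t q.2.2.1 q.1 then 1 else 0)) := by
    intro q
    have hI : (0:ℝ) ≤ (if q.2.1 = cmb t q.1 q.2.2.1 then (1:ℝ) else 0) *
       (if q.2.2.2 = cmb t q.2.2.1 q.1 then 1 else 0) := by positivity
    refine mul_le_mul_of_nonneg_right ?_ hI
    nlinarith [sq_nonneg (f q.1 * f q.2.2.1 - f q.2.1 * f q.2.2.2), hf q.1, hf q.2.1,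
      hf q.2.2.1, hf q.2.2.2, mul_nonneg (hf q.1) (hf q.2.2.1),
      mul_nonneg (hf q.2.1) (hf q.2.2.2)]
  calc _ ≤ ∑ q : Quad n d, (f q.1 ^ 2 * f q.2.2.1 ^ 2 + f q.2.1 ^ 2 * f q.2.2.2 ^ 2) / 2 *
      ((if q.2.1 = cmb t q.1 q.2.2.1 then (1:ℝ) else 0) *
       (if q.2.2.2 = cmb t q.2.2.1 q.1 then 1 else 0)) :=
        Finset.sum_le_sum fun q _ => step q
    _ = 1 := by
        have expand : ∀ q : Quad n d, (f q.1 ^ 2 * f q.2.2.1 ^ 2 + f q.2.1 ^ 2 * f q.2.2.2 ^ 2) / 2 *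
            ((if q.2.1 = cmb t q.1 q.2.2.1 then (1:ℝ) else 0) *
             (if q.2.2.2 = cmb t q.2.2.1 q.1 then 1 else 0))
            = (f q.1 ^ 2 * f q.2.2.1 ^ 2 *
                ((if q.2.1 = cmb t q.1 q.2.2.1 then (1:ℝ) else 0) *
                 (if q.2.2.2 = cmb t q.2.2.1 q.1 then 1 else 0))
              + f q.2.1 ^ 2 * f q.2.2.2 ^ 2 *
                ((if q.2.1 = cmb t q.1 q.2.2.1 then (1:ℝ) else 0) *
                 (if q.2.2.2 = cmb t q.2.2.1 q.1 then 1 else 0))) / 2 := fun q => by ring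
        simp only [expand]
        rw [← Finset.sum_div, Finset.sum_add_distrib, sum_quad_one f hsum t, sum_quad_one' f hsum t]
        norm_num

lemma combinatorial_bound {n d : ℕ} (f : (Fin n → Fin d) → ℝ) (hf : ∀ w, 0 ≤ f w)
    (hsum : ∑ w, f w ^ 2 = 1) :
    ∑ q : Quad n d, f q.1 * f q.2.1 * f q.2.2.1 * f q.2.2.2 *
      ∏ j, ((if q.1 j = q.2.1 j then (1:ℝ) else 0) * (if q.2.2.1 j = q.2.2.2 j then 1 else 0)
            + (if q.1 j = q.2.2.2 j then 1 else 0) * (if q.2.1 j = q.2.2.1 j then 1 else 0))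
      ≤ 2 ^ n := by
  have expand : ∀ q : Quad n d, f q.1 * f q.2.1 * f q.2.2.1 * f q.2.2.2 *
      ∏ j, ((if q.1 j = q.2.1 j then (1:ℝ) else 0) * (if q.2.2.1 j = q.2.2.2 j then 1 else 0)
            + (if q.1 j = q.2.2.2 j then 1 else 0) * (if q.2.1 j = q.2.2.1 j then 1 else 0))
      = ∑ t ∈ (univ : Finset (Fin n)).powerset,
          f q.1 * f q.2.1 * f q.2.2.1 * f q.2.2.2 *
          ((if q.2.1 = cmb t q.1 q.2.2.1 then (1:ℝ) else 0) *
           (if q.2.2.2 = cmb t q.2.2.1 q.1 then 1 else 0)) := by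
    intro q
    rw [Finset.prod_add, Finset.mul_sum]
    exact Finset.sum_congr rfl fun t _ => by rw [delta_split]
  calc ∑ q : Quad n d, f q.1 * f q.2.1 * f q.2.2.1 * f q.2.2.2 *
      ∏ j, ((if q.1 j = q.2.1 j then (1:ℝ) else 0) * (if q.2.2.1 j = q.2.2.2 j then 1 else 0)
            + (if q.1 j = q.2.2.2 j then 1 else 0) * (if q.2.1 j = q.2.2.1 j then 1 else 0))
      = ∑ t ∈ (univ : Finset (Fin n)).powerset, ∑ q : Quad n d,
          f q.1 * f q.2.1 * f q.2.2.1 * f q.2.2.2 *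
          ((if q.2.1 = cmb t q.1 q.2.2.1 then (1:ℝ) else 0) *
           (if q.2.2.2 = cmb t q.2.2.1 q.1 then 1 else 0)) := by
        rw [← Finset.sum_comm]
        exact Finset.sum_congr rfl fun q _ => expand q
    _ ≤ ∑ t ∈ (univ : Finset (Fin n)).powerset, (1:ℝ) :=
        Finset.sum_le_sum fun t _ => per_t_bound f hf hsum t
    _ = 2 ^ n := by simp [Finset.card_powerset]



lemma ProbabilityTheory.IndepFun.integral_complex_mul {Ω : Type*} [MeasurableSpace Ω] {P : Measure Ω}
    [IsProbabilityMeasure P] {X Y : Ω → ℂ} (h : IndepFun X Y P)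
    (hX : Integrable X P) (hY : Integrable Y P) :
    ∫ ω, X ω * Y ω ∂P = (∫ ω, X ω ∂P) * ∫ ω, Y ω ∂P := by
  have hXY : Integrable (fun ω => X ω * Y ω) P := h.integrable_mul hX hY
  have hrr : IndepFun (fun ω => (X ω).re) (fun ω => (Y ω).re) P :=
    h.comp Complex.measurable_re Complex.measurable_re
  have hri : IndepFun (fun ω => (X ω).re) (fun ω => (Y ω).im) P :=
    h.comp Complex.measurable_re Complex.measurable_im
  have hir : IndepFun (fun ω => (X ω).im) (fun ω => (Y ω).re) P :=
    h.comp Complex.measurable_im Complex.measurable_re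
  have hii : IndepFun (fun ω => (X ω).im) (fun ω => (Y ω).im) P :=
    h.comp Complex.measurable_im Complex.measurable_im
  have iXr : Integrable (fun ω => (X ω).re) P := hX.re
  have iXi : Integrable (fun ω => (X ω).im) P := hX.im
  have iYr : Integrable (fun ω => (Y ω).re) P := hY.re
  have iYi : Integrable (fun ω => (Y ω).im) P := hY.im
  have err : ∫ ω, (X ω).re * (Y ω).re ∂P = (∫ ω, (X ω).re ∂P) * ∫ ω, (Y ω).re ∂P := by
    exact hrr.integral_fun_mul_eq_mul_integral iXr.aestronglyMeasurable iYr.aestronglyMeasurable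
  have eri : ∫ ω, (X ω).re * (Y ω).im ∂P = (∫ ω, (X ω).re ∂P) * ∫ ω, (Y ω).im ∂P := by
    exact hri.integral_fun_mul_eq_mul_integral iXr.aestronglyMeasurable iYi.aestronglyMeasurable
  have eir : ∫ ω, (X ω).im * (Y ω).re ∂P = (∫ ω, (X ω).im ∂P) * ∫ ω, (Y ω).re ∂P := by
    exact hir.integral_fun_mul_eq_mul_integral iXi.aestronglyMeasurable iYr.aestronglyMeasurable
  have eii : ∫ ω, (X ω).im * (Y ω).im ∂P = (∫ ω, (X ω).im ∂P) * ∫ ω, (Y ω).im ∂P := by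
    exact hii.integral_fun_mul_eq_mul_integral iXi.aestronglyMeasurable iYi.aestronglyMeasurable
  have irr : Integrable (fun ω => (X ω).re * (Y ω).re) P := by
    exact hrr.integrable_mul iXr iYr
  have iri : Integrable (fun ω => (X ω).re * (Y ω).im) P := by
    exact hri.integrable_mul iXr iYi
  have iir : Integrable (fun ω => (X ω).im * (Y ω).re) P := by
    exact hir.integrable_mul iXi iYr
  have iii : Integrable (fun ω => (X ω).im * (Y ω).im) P := by
    exact hii.integrable_mul iXi iYi
  have cre : ∀ {f : Ω → ℂ}, Integrable f P → (∫ ω, f ω ∂P).re = ∫ ω, (f ω).re ∂P :=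
    fun hf => by simpa [RCLike.re_eq_complex_re] using (integral_re hf).symm
  have cim : ∀ {f : Ω → ℂ}, Integrable f P → (∫ ω, f ω ∂P).im = ∫ ω, (f ω).im ∂P :=
    fun hf => by simpa [RCLike.im_eq_complex_im] using (integral_im hf).symm
  apply Complex.ext
  · rw [cre hXY]
    have h' : ∀ ω, (X ω * Y ω).re = (X ω).re * (Y ω).re - (X ω).im * (Y ω).im :=
      fun ω => Complex.mul_re _ _
    rw [integral_congr_ae (ae_of_all _ h'), integral_sub irr iii, err, eii,
      Complex.mul_re, cre hX, cre hY, cim hX, cim hY]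
  · rw [cim hXY]
    have h' : ∀ ω, (X ω * Y ω).im = (X ω).re * (Y ω).im + (X ω).im * (Y ω).re :=
      fun ω => Complex.mul_im _ _
    rw [integral_congr_ae (ae_of_all _ h'), integral_add iri iir, eri, eir,
      Complex.mul_im, cre hX, cre hY, cim hX, cim hY]


lemma indep_prod_integral {Ω : Type*} [MeasurableSpace Ω] (P : Measure Ω) [IsProbabilityMeasure P]
    {n d : ℕ} (θ : Fin n → Fin d → Ω → ℝ) (hmeas : ∀ j w, Measurable (θ j w))
    (hindep : iIndepFun (fun p : Fin n × Fin d => θ p.1 p.2) P)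
    (φ : Fin n → (Fin d → ℝ) → ℂ) (hφm : ∀ j, Measurable (φ j)) (hφb : ∀ j v, ‖φ j v‖ ≤ 1) :
    ∫ ω, ∏ j, φ j (fun i => θ j i ω) ∂P = ∏ j, ∫ ω, φ j (fun i => θ j i ω) ∂P := by
  classical
  have hgm : ∀ j, Measurable (fun ω => φ j (fun i => θ j i ω)) :=
    fun j => (hφm j).comp (measurable_pi_lambda _ fun i => hmeas j i)
  have hint : ∀ j, Integrable (fun ω => φ j (fun i => θ j i ω)) P :=
    fun j => Integrable.mono' (integrable_const (1:ℝ)) (hgm j).aestronglyMeasurable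
      (ae_of_all _ fun ω => hφb j _)
  suffices H : ∀ s : Finset (Fin n),
      ∫ ω, ∏ j ∈ s, φ j (fun i => θ j i ω) ∂P = ∏ j ∈ s, ∫ ω, φ j (fun i => θ j i ω) ∂P by
    exact H univ
  intro s
  induction s using Finset.induction with
  | empty => simp
  | insert a s ha ih =>
    have hintprod : Integrable (fun ω => ∏ j ∈ s, φ j (fun i => θ j i ω)) P := by
      refine Integrable.mono' (integrable_const (1:ℝ))
        (Finset.measurable_prod s fun j _ => hgm j).aestronglyMeasurable (ae_of_all _ fun ω => ?_)
      refine le_trans (norm_prod_le _ _) (Finset.prod_le_one (fun j _ => norm_nonneg _)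
        (fun j _ => hφb j _))
    have hdisj : Disjoint ({a} ×ˢ (univ : Finset (Fin d))) (s ×ˢ univ) := by
      simp only [Finset.disjoint_left, Finset.mem_product, Finset.mem_singleton]
      rintro ⟨p1, p2⟩ ⟨rfl, -⟩ ⟨hp, -⟩
      exact ha hp
    have hFa : Measurable (fun v : (↥({a} ×ˢ (univ : Finset (Fin d))) → ℝ) =>
        φ a (fun i => v ⟨(a, i), Finset.mem_product.mpr ⟨Finset.mem_singleton_self a,
          Finset.mem_univ i⟩⟩)) :=
      (hφm a).comp (measurable_pi_lambda _ fun i => measurable_pi_apply _)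
    have hG : Measurable (fun v : (↥(s ×ˢ (univ : Finset (Fin d))) → ℝ) =>
        ∏ j ∈ s.attach, φ j.1 (fun i => v ⟨(j.1, i),
          Finset.mem_product.mpr ⟨j.2, Finset.mem_univ i⟩⟩)) :=
      Finset.measurable_prod _ fun j _ =>
        (hφm j.1).comp (measurable_pi_lambda _ fun i => measurable_pi_apply _)
    have hindep2 : IndepFun (fun ω => φ a (fun i => θ a i ω))
        (fun ω => ∏ j ∈ s, φ j (fun i => θ j i ω)) P := by
      have h := (hindep.indepFun_finset ({a} ×ˢ (univ : Finset (Fin d))) (s ×ˢ univ) hdisj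
        (fun p => hmeas p.1 p.2)).comp hFa hG
      have heq : (fun v : (↥(s ×ˢ (univ : Finset (Fin d))) → ℝ) =>
          ∏ j ∈ s.attach, φ j.1 (fun i => v ⟨(j.1, i),
            Finset.mem_product.mpr ⟨j.2, Finset.mem_univ i⟩⟩))
          ∘ (fun ω (p : ↥(s ×ˢ (univ : Finset (Fin d)))) => θ (p : Fin n × Fin d).1
              (p : Fin n × Fin d).2 ω)
          = fun ω => ∏ j ∈ s, φ j (fun i => θ j i ω) := by
        funext ω
        exact Finset.prod_attach s (fun j => φ j (fun i => θ j i ω))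
      rw [heq] at h
      exact h
    calc ∫ ω, ∏ j ∈ insert a s, φ j (fun i => θ j i ω) ∂P
        = ∫ ω, (φ a (fun i => θ a i ω) * ∏ j ∈ s, φ j (fun i => θ j i ω)) ∂P := by
          simp only [Finset.prod_insert ha]
      _ = (∫ ω, φ a (fun i => θ a i ω) ∂P) * ∫ ω, ∏ j ∈ s, φ j (fun i => θ j i ω) ∂P := by
          exact hindep2.integral_complex_mul (hint a) hintprod
      _ = ∏ j ∈ insert a s, ∫ ω, φ j (fun i => θ j i ω) ∂P := by
          rw [ih, Finset.prod_insert ha]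

lemma integral_complex_re {Ω : Type*} [MeasurableSpace Ω] {P : Measure Ω} {f : Ω → ℂ}
    (hf : Integrable f P) : ∫ ω, (f ω).re ∂P = (∫ ω, f ω ∂P).re := by
  simpa [RCLike.re_eq_complex_re] using integral_re hf


section Main

variable {Ω : Type*} [MeasurableSpace Ω]

noncomputable def EE {n d : ℕ} (θ : Fin n → Fin d → Ω → ℝ) (w : Fin n → Fin d) (ω : Ω) : ℂ :=
  ∏ j, Complex.exp (Complex.I * θ j (w j) ω)

noncomputable def cc {n d : ℕ} (m : Fin n → Fin d) (Φ : (Fin n → Fin d) → ℂ) (w : Fin n → Fin d) : ℂ :=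
  (starRingEnd ℂ) (Φ w) * ∏ j, ((1 / Real.sqrt d) *
    Complex.exp (2 * Real.pi * Complex.I * (m j : ℕ) * (w j : ℕ) / d))

noncomputable def GG {n d : ℕ} (θ : Fin n → Fin d → Ω → ℝ) (q : Quad n d) (ω : Ω) : ℂ :=
  ∏ j, Complex.exp (Complex.I * ((θ j (q.1 j) ω : ℂ) - θ j (q.2.1 j) ω
    + θ j (q.2.2.1 j) ω - θ j (q.2.2.2 j) ω))

noncomputable def CC {n d : ℕ} (m : Fin n → Fin d) (Φ : (Fin n → Fin d) → ℂ) (q : Quad n d) : ℂ :=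
  cc m Φ q.1 * (starRingEnd ℂ) (cc m Φ q.2.1) *
    (cc m Φ q.2.2.1 * (starRingEnd ℂ) (cc m Φ q.2.2.2))

lemma EEcomb {n d : ℕ} (θ : Fin n → Fin d → Ω → ℝ) (q : Quad n d) (ω : Ω) :
    EE θ q.1 ω * (starRingEnd ℂ) (EE θ q.2.1 ω) *
      (EE θ q.2.2.1 ω * (starRingEnd ℂ) (EE θ q.2.2.2 ω)) = GG θ q ω := by
  have hconjE : ∀ x : Fin n → Fin d, (starRingEnd ℂ) (EE θ x ω)
      = ∏ j, Complex.exp (-(Complex.I * θ j (x j) ω)) := by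
    intro x
    rw [EE, map_prod]
    refine Finset.prod_congr rfl fun j _ => ?_
    rw [← Complex.exp_conj]
    congr 1
    rw [map_mul, Complex.conj_I, Complex.conj_ofReal]
    ring
  rw [hconjE, hconjE, EE, EE, GG, ← Finset.prod_mul_distrib, ← Finset.prod_mul_distrib,
    ← Finset.prod_mul_distrib]
  refine Finset.prod_congr rfl fun j _ => ?_
  rw [← Complex.exp_add, ← Complex.exp_add, ← Complex.exp_add]
  congr 1
  ring

lemma GG_norm_le {n d : ℕ} (θ : Fin n → Fin d → Ω → ℝ) (q : Quad n d) (ω : Ω) :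
    ‖GG θ q ω‖ ≤ 1 := by
  rw [GG]
  refine le_trans (norm_prod_le _ _) (Finset.prod_le_one (fun j _ => norm_nonneg _)
    (fun j _ => ?_))
  have h : ((θ j (q.1 j) ω : ℂ) - θ j (q.2.1 j) ω + θ j (q.2.2.1 j) ω - θ j (q.2.2.2 j) ω)
      = ((θ j (q.1 j) ω - θ j (q.2.1 j) ω + θ j (q.2.2.1 j) ω - θ j (q.2.2.2 j) ω : ℝ) : ℂ) := by
    push_cast; ring
  rw [h, norm_exp_I_mul_real]

lemma GG_meas {n d : ℕ} (θ : Fin n → Fin d → Ω → ℝ) (hmeas : ∀ j w, Measurable (θ j w))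
    (q : Quad n d) : Measurable (GG θ q) := by
  refine Finset.measurable_prod _ fun j _ => Complex.measurable_exp.comp (Measurable.const_mul ?_ _)
  exact ((((Complex.measurable_ofReal.comp (hmeas j (q.1 j))).sub
    (Complex.measurable_ofReal.comp (hmeas j (q.2.1 j)))).add
    (Complex.measurable_ofReal.comp (hmeas j (q.2.2.1 j)))).sub
    (Complex.measurable_ofReal.comp (hmeas j (q.2.2.2 j))))

lemma cc_norm {n d : ℕ} (hd : 0 < d) (m : Fin n → Fin d) (Φ : (Fin n → Fin d) → ℂ)
    (w : Fin n → Fin d) : ‖cc m Φ w‖ = ‖Φ w‖ * ((Real.sqrt d)⁻¹) ^ n := by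
  rw [cc, norm_mul, RCLike.norm_conj, norm_prod]
  congr 1
  rw [Finset.prod_congr rfl (fun j _ => ?_), Finset.prod_const, Finset.card_univ,
    Fintype.card_fin]
  rw [norm_mul, norm_exp_fourier (m j) (w j) d, mul_one]
  have h0 : (0:ℝ) ≤ Real.sqrt d := Real.sqrt_nonneg _
  rw [show ((1 : ℂ) / (Real.sqrt d : ℝ)) = (((Real.sqrt d)⁻¹ : ℝ) : ℂ) by push_cast; ring]
  rw [Complex.norm_real, Real.norm_eq_abs, abs_of_nonneg (by positivity)]

end Main

/-- for `n` i.i.d. random diagonal phase unitaries on `C^d` (i.i.d. phases with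
vanishing first moment and the stated fourth-moment identity), a product Fourier basis vector
`|m⟩` and any fixed unit vector `Φ` in `(C^d)^{⊗n}`, the random variable
`q(Φ) = |⟨Φ|(⊗_j U^j)|m⟩|²` satisfies `E[q(Φ)²] ≤ 2^n / d^{2n}`. -/
theorem stmt5 {Ω : Type*} [MeasurableSpace Ω] (P : Measure Ω) [IsProbabilityMeasure P]
    (n d : ℕ) (hd : 0 < d)
    (θ : Fin n → Fin d → Ω → ℝ)
    (hmeas : ∀ j w, Measurable (θ j w))
    (hindep : iIndepFun (fun p : Fin n × Fin d => θ p.1 p.2) P)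
    (hident : ∀ p q : Fin n × Fin d, IdentDistrib (θ p.1 p.2) (θ q.1 q.2) P P)
    (h1 : ∀ j w, ∫ ω, Complex.exp (Complex.I * θ j w ω) ∂P = 0)
    (h4 : ∀ j (a b c e : Fin d),
      ∫ ω, Complex.exp (Complex.I * (θ j a ω - θ j b ω + θ j c ω - θ j e ω)) ∂P
        = ((if a = b then (1:ℂ) else 0) * (if c = e then 1 else 0)
            + (if a = e then 1 else 0) * (if b = c then 1 else 0))
          / (1 + (if a = c then 1 else 0)))
    (m : Fin n → Fin d)
    (Φ : (Fin n → Fin d) → ℂ) (hΦ : ∑ w, ‖Φ w‖ ^ 2 = 1) :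
    ∫ ω, (‖∑ w : Fin n → Fin d, (starRingEnd ℂ) (Φ w) *
          ∏ j, (Complex.exp (Complex.I * θ j (w j) ω) *
            ((1 / Real.sqrt d) *
              Complex.exp (2 * Real.pi * Complex.I * (m j : ℕ) * (w j : ℕ) / d)))‖ ^ 2) ^ 2 ∂P
      ≤ 2 ^ n / (d : ℝ) ^ (2 * n) := by
  classical
  have hd0 : (0:ℝ) < d := by exact_mod_cast hd
  -- pointwise rewrite of the integrand
  have hrw : ∀ ω, (‖∑ w : Fin n → Fin d, (starRingEnd ℂ) (Φ w) *
          ∏ j, (Complex.exp (Complex.I * θ j (w j) ω) *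
            ((1 / Real.sqrt d) *
              Complex.exp (2 * Real.pi * Complex.I * (m j : ℕ) * (w j : ℕ) / d)))‖ ^ 2) ^ 2
      = (∑ q : Quad n d, CC m Φ q * GG θ q ω).re := by
    intro ω
    have hsum : (∑ w : Fin n → Fin d, (starRingEnd ℂ) (Φ w) *
          ∏ j, (Complex.exp (Complex.I * θ j (w j) ω) *
            ((1 / Real.sqrt d) *
              Complex.exp (2 * Real.pi * Complex.I * (m j : ℕ) * (w j : ℕ) / d))))
        = ∑ w, cc m Φ w * EE θ w ω :=
      Finset.sum_congr rfl fun w _ => by rw [cc, EE, Finset.prod_mul_distrib]; ring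
    rw [hsum]
    set S := ∑ w, cc m Φ w * EE θ w ω with hS
    have hK : S * (starRingEnd ℂ) S * (S * (starRingEnd ℂ) S)
        = ∑ q : Quad n d, CC m Φ q * GG θ q ω := by
      rw [hS, map_sum, sum_mul4 (fun w => cc m Φ w * EE θ w ω)
        (fun x => (starRingEnd ℂ) (cc m Φ x * EE θ x ω))
        (fun w => cc m Φ w * EE θ w ω)
        (fun x => (starRingEnd ℂ) (cc m Φ x * EE θ x ω))]
      refine Finset.sum_congr rfl fun q _ => ?_
      rw [map_mul, map_mul, ← EEcomb θ q ω, CC]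
      ring
    rw [← hK, Complex.mul_conj S, ← Complex.ofReal_mul, Complex.ofReal_re,
      Complex.sq_norm]
    ring
  -- integrability
  have hGint : ∀ q : Quad n d, Integrable (GG θ q) P := fun q =>
    Integrable.mono' (integrable_const 1) (GG_meas θ hmeas q).aestronglyMeasurable
      (ae_of_all _ fun ω => GG_norm_le θ q ω)
  have hTint : ∀ q : Quad n d, Integrable (fun ω => CC m Φ q * GG θ q ω) P := fun q =>
    (hGint q).const_mul _
  -- value of ∫ GG
  have hGval : ∀ q : Quad n d, ∫ ω, GG θ q ω ∂P
      = ∏ j, (((if q.1 j = q.2.1 j then (1:ℂ) else 0) *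
            (if q.2.2.1 j = q.2.2.2 j then 1 else 0)
          + (if q.1 j = q.2.2.2 j then 1 else 0) * (if q.2.1 j = q.2.2.1 j then 1 else 0))
          / (1 + (if q.1 j = q.2.2.1 j then 1 else 0))) := by
    intro q
    have hφm : ∀ j : Fin n, Measurable (fun v : Fin d → ℝ =>
        Complex.exp (Complex.I * ((v (q.1 j) : ℂ) - v (q.2.1 j) + v (q.2.2.1 j)
          - v (q.2.2.2 j)))) := by
      intro j
      refine Complex.measurable_exp.comp (Measurable.const_mul ?_ _)
      exact ((((Complex.measurable_ofReal.comp (measurable_pi_apply _)).sub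
        (Complex.measurable_ofReal.comp (measurable_pi_apply _))).add
        (Complex.measurable_ofReal.comp (measurable_pi_apply _))).sub
        (Complex.measurable_ofReal.comp (measurable_pi_apply _)))
    have hφb : ∀ (j : Fin n) (v : Fin d → ℝ),
        ‖Complex.exp (Complex.I * ((v (q.1 j) : ℂ) - v (q.2.1 j) + v (q.2.2.1 j)
          - v (q.2.2.2 j)))‖ ≤ 1 := by
      intro j v
      have h : ((v (q.1 j) : ℂ) - v (q.2.1 j) + v (q.2.2.1 j) - v (q.2.2.2 j))
          = ((v (q.1 j) - v (q.2.1 j) + v (q.2.2.1 j) - v (q.2.2.2 j) : ℝ) : ℂ) := by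
        push_cast; ring
      rw [h, norm_exp_I_mul_real]
    have h := indep_prod_integral P θ hmeas hindep
      (fun j v => Complex.exp (Complex.I * ((v (q.1 j) : ℂ) - v (q.2.1 j) + v (q.2.2.1 j)
        - v (q.2.2.2 j)))) hφm hφb
    calc ∫ ω, GG θ q ω ∂P
        = ∏ j, ∫ ω, Complex.exp (Complex.I * ((θ j (q.1 j) ω : ℂ) - θ j (q.2.1 j) ω
            + θ j (q.2.2.1 j) ω - θ j (q.2.2.2 j) ω)) ∂P := h
      _ = _ := Finset.prod_congr rfl fun j _ => h4 j _ _ _ _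
  -- norm of CC
  have hpow : (Real.sqrt d)⁻¹ ^ n * ((Real.sqrt d)⁻¹ ^ n) *
      ((Real.sqrt d)⁻¹ ^ n * ((Real.sqrt d)⁻¹ ^ n)) = ((d:ℝ) ^ (2 * n))⁻¹ := by
    have h1 : (Real.sqrt d)⁻¹ ^ n * ((Real.sqrt d)⁻¹ ^ n) *
        ((Real.sqrt d)⁻¹ ^ n * ((Real.sqrt d)⁻¹ ^ n))
        = (Real.sqrt d)⁻¹ ^ (n + n + (n + n)) := by
      rw [pow_add, pow_add]
    rw [h1, inv_pow]
    congr 1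
    rw [show n + n + (n + n) = 2 * (2 * n) by ring, pow_mul, Real.sq_sqrt hd0.le]
  have hCC : ∀ q : Quad n d, ‖CC m Φ q‖
      = ‖Φ q.1‖ * ‖Φ q.2.1‖ * ‖Φ q.2.2.1‖ * ‖Φ q.2.2.2‖ * ((d:ℝ) ^ (2 * n))⁻¹ := by
    intro q
    rw [CC, norm_mul, norm_mul, norm_mul, RCLike.norm_conj, RCLike.norm_conj,
      cc_norm hd, cc_norm hd, cc_norm hd, cc_norm hd, ← hpow]
    ring
  have hre : ∀ z : ℂ, z.re ≤ ‖z‖ := fun z => by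
    exact Complex.re_le_norm z
  -- main chain
  calc ∫ ω, (‖∑ w : Fin n → Fin d, (starRingEnd ℂ) (Φ w) *
          ∏ j, (Complex.exp (Complex.I * θ j (w j) ω) *
            ((1 / Real.sqrt d) *
              Complex.exp (2 * Real.pi * Complex.I * (m j : ℕ) * (w j : ℕ) / d)))‖ ^ 2) ^ 2 ∂P
      = ∫ ω, (∑ q : Quad n d, CC m Φ q * GG θ q ω).re ∂P := by simp only [hrw]
    _ = (∫ ω, ∑ q : Quad n d, CC m Φ q * GG θ q ω ∂P).re :=
        integral_complex_re (integrable_finset_sum _ fun q _ => hTint q)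
    _ = (∑ q : Quad n d, CC m Φ q * ∫ ω, GG θ q ω ∂P).re := by
        rw [integral_finset_sum _ fun q _ => hTint q]
        congr 1
        exact Finset.sum_congr rfl fun q _ => integral_const_mul _ _
    _ ≤ ‖∑ q : Quad n d, CC m Φ q * ∫ ω, GG θ q ω ∂P‖ := hre _
    _ ≤ ∑ q : Quad n d, ‖CC m Φ q * ∫ ω, GG θ q ω ∂P‖ := norm_sum_le _ _
    _ ≤ ∑ q : Quad n d, (‖Φ q.1‖ * ‖Φ q.2.1‖ * ‖Φ q.2.2.1‖ * ‖Φ q.2.2.2‖ *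
          ((d:ℝ) ^ (2 * n))⁻¹) *
          ∏ j, ((if q.1 j = q.2.1 j then (1:ℝ) else 0) *
              (if q.2.2.1 j = q.2.2.2 j then 1 else 0)
            + (if q.1 j = q.2.2.2 j then 1 else 0) *
              (if q.2.1 j = q.2.2.1 j then 1 else 0)) := by
        refine Finset.sum_le_sum fun q _ => ?_
        rw [norm_mul, hGval q, hCC q]
        refine mul_le_mul_of_nonneg_left ?_ (by positivity)
        refine le_trans (le_of_eq (norm_prod _ _)) ?_
        exact Finset.prod_le_prod (fun j _ => norm_nonneg _)
          (fun j _ => Dnorm_le (q.1 j) (q.2.1 j) (q.2.2.1 j) (q.2.2.2 j))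
    _ = ((d:ℝ) ^ (2 * n))⁻¹ * ∑ q : Quad n d,
          (fun w => ‖Φ w‖) q.1 * (fun w => ‖Φ w‖) q.2.1 * (fun w => ‖Φ w‖) q.2.2.1 *
            (fun w => ‖Φ w‖) q.2.2.2 *
          ∏ j, ((if q.1 j = q.2.1 j then (1:ℝ) else 0) *
              (if q.2.2.1 j = q.2.2.2 j then 1 else 0)
            + (if q.1 j = q.2.2.2 j then 1 else 0) *
              (if q.2.1 j = q.2.2.1 j then 1 else 0)) := by
        rw [Finset.mul_sum]
        exact Finset.sum_congr rfl fun q _ => by ring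
    _ ≤ ((d:ℝ) ^ (2 * n))⁻¹ * 2 ^ n := by
        refine mul_le_mul_of_nonneg_left ?_ (by positivity)
        exact combinatorial_bound (fun w => ‖Φ w‖) (fun w => norm_nonneg _) hΦ
    _ = 2 ^ n / (d : ℝ) ^ (2 * n) := by rw [div_eq_mul_inv, mul_comm]
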